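/- arXiv:1306.0945 — 3 statements merged into one kernel-verified Lean document; each statement's English description precedes it below -/
import Mathlib

section
/- The Choi map Φ is a positive linear map: for every positive semidefinite matrix X ∈ M₃(ℂ), the matrix Φ(X) is positive semidefinite. -/
open Matrix Complex ComplexOrder

/-- The Choi map on 3×3 complex matrices. -/
noncomputable def ChoiMap (X : Matrix (Fin 3) (Fin 3) ℂ) : Matrix (Fin 3) (Fin 3) ℂ :=
  !![X 0 0 + X 2 2, -X 0 1, -X 0 2;
     -X 1 0, X 1 1 + X 0 0, -X 1 2;
     -X 2 0, -X 2 1, X 2 2 + X 1 1]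

private lemma choi_key (a1 a2 a3 b1 b2 b3 : ℝ) (h1 : 0 ≤ a1) (h2 : 0 ≤ a2) (h3 : 0 ≤ a3)
    (g1 : 0 ≤ b1) (g2 : 0 ≤ b2) (g3 : 0 ≤ b3) :
    2*(a1*b1*(a2*b2) + a2*b2*(a3*b3) + a1*b1*(a3*b3)) ≤
      (a1*b1)^2+(a2*b2)^2+(a3*b3)^2+(a3*b1)^2+(a1*b2)^2+(a2*b3)^2 := by
  nlinarith [sq_nonneg (a1*b1 - a2*b2), sq_nonneg (a2*b2 - a3*b3), sq_nonneg (a1*b1 - a3*b3),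
    sq_nonneg (a1*b2 - a2*b1), sq_nonneg (a2*b3 - a3*b2), sq_nonneg (a3*b1 - a1*b3),
    mul_nonneg (mul_nonneg h1 g1) (mul_nonneg h2 g2),
    mul_nonneg (mul_nonneg h2 g2) (mul_nonneg h3 g3),
    mul_nonneg (mul_nonneg h1 g1) (mul_nonneg h3 g3),
    mul_nonneg (mul_nonneg h1 g2) (mul_nonneg h2 g1),
    mul_nonneg (mul_nonneg h2 g3) (mul_nonneg h3 g2),
    mul_nonneg (mul_nonneg h3 g1) (mul_nonneg h1 g3)]

private lemma choiMap_add (A B : Matrix (Fin 3) (Fin 3) ℂ) :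
    ChoiMap (A + B) = ChoiMap A + ChoiMap B := by
  ext i j
  fin_cases i <;> fin_cases j <;> simp [ChoiMap] <;> ring

private lemma choi_rank_one (v : Fin 3 → ℂ) :
    (ChoiMap (vecMulVec v (star v))).PosSemidef := by
  rw [posSemidef_iff_dotProduct_mulVec]
  constructor
  · ext i j
    fin_cases i <;> fin_cases j <;>
      simp [ChoiMap, vecMulVec_apply, conjTranspose_apply, mul_comm]
  · intro x
    have key : star x ⬝ᵥ (ChoiMap (vecMulVec v (star v))) *ᵥ x =
        ((2*(Complex.normSq (star (x 0) * v 0) + Complex.normSq (star (x 1) * v 1)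
            + Complex.normSq (star (x 2) * v 2))
          + Complex.normSq (v 2) * Complex.normSq (x 0)
          + Complex.normSq (v 0) * Complex.normSq (x 1)
          + Complex.normSq (v 1) * Complex.normSq (x 2)
          - Complex.normSq (star (x 0) * v 0 + star (x 1) * v 1 + star (x 2) * v 2) : ℝ) : ℂ) := by
      simp only [ChoiMap, vecMulVec_apply, dotProduct, mulVec, Fin.sum_univ_three,
        Pi.star_apply, Complex.normSq_apply, Complex.ext_iff, Complex.add_re, Complex.add_im,
        Complex.mul_re, Complex.mul_im, Complex.sub_re, Complex.sub_im, Complex.neg_re,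
        Complex.neg_im, Complex.ofReal_re, Complex.ofReal_im, Complex.star_def,
        Complex.conj_re, Complex.conj_im, Matrix.cons_val', Matrix.cons_val_zero,
        Matrix.cons_val_one, Matrix.head_cons, Matrix.empty_val', Matrix.cons_val_fin_one,
        Matrix.head_fin_const, Matrix.of_apply, Matrix.cons_val_two, Matrix.tail_cons]
      constructor <;> ring
    rw [key, Complex.zero_le_real]
    set a1 := ‖v 0‖ with ha1
    set a2 := ‖v 1‖ with ha2
    set a3 := ‖v 2‖ with ha3
    set b1 := ‖x 0‖ with hb1
    set b2 := ‖x 1‖ with hb2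
    set b3 := ‖x 2‖ with hb3
    have hw1 : Complex.normSq (star (x 0) * v 0) = (a1*b1)^2 := by
      rw [← Complex.sq_norm, norm_mul, Complex.star_def, Complex.norm_conj]; ring
    have hw2 : Complex.normSq (star (x 1) * v 1) = (a2*b2)^2 := by
      rw [← Complex.sq_norm, norm_mul, Complex.star_def, Complex.norm_conj]; ring
    have hw3 : Complex.normSq (star (x 2) * v 2) = (a3*b3)^2 := by
      rw [← Complex.sq_norm, norm_mul, Complex.star_def, Complex.norm_conj]; ring
    have hv1 : Complex.normSq (v 0) = a1^2 := (Complex.sq_norm _).symm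
    have hv2 : Complex.normSq (v 1) = a2^2 := (Complex.sq_norm _).symm
    have hv3 : Complex.normSq (v 2) = a3^2 := (Complex.sq_norm _).symm
    have hx1 : Complex.normSq (x 0) = b1^2 := (Complex.sq_norm _).symm
    have hx2 : Complex.normSq (x 1) = b2^2 := (Complex.sq_norm _).symm
    have hx3 : Complex.normSq (x 2) = b3^2 := (Complex.sq_norm _).symm
    have htri : ‖star (x 0) * v 0 + star (x 1) * v 1 + star (x 2) * v 2‖
        ≤ a1*b1 + a2*b2 + a3*b3 := by
      calc ‖star (x 0) * v 0 + star (x 1) * v 1 + star (x 2) * v 2‖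
          ≤ ‖star (x 0) * v 0 + star (x 1) * v 1‖
            + ‖star (x 2) * v 2‖ := norm_add_le _ _
        _ ≤ ‖star (x 0) * v 0‖ + ‖star (x 1) * v 1‖
            + ‖star (x 2) * v 2‖ := by
              gcongr; exact norm_add_le _ _
        _ = a1*b1 + a2*b2 + a3*b3 := by
              simp only [norm_mul, Complex.star_def, Complex.norm_conj]; ring
    have hS : Complex.normSq (star (x 0) * v 0 + star (x 1) * v 1 + star (x 2) * v 2)
        ≤ (a1*b1 + a2*b2 + a3*b3)^2 := by
      rw [← Complex.sq_norm]
      exact pow_le_pow_left₀ (norm_nonneg _) htri 2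
    have hkey := choi_key a1 a2 a3 b1 b2 b3 (norm_nonneg _) (norm_nonneg _)
      (norm_nonneg _) (norm_nonneg _) (norm_nonneg _) (norm_nonneg _)
    rw [hw1, hw2, hw3, hv1, hv2, hv3, hx1, hx2, hx3]
    nlinarith [hS, hkey]

/-- The Choi map is a positive map: it sends positive semidefinite matrices to
positive semidefinite matrices. -/
theorem choiMap_positive (X : Matrix (Fin 3) (Fin 3) ℂ) (hX : X.PosSemidef) :
    (ChoiMap X).PosSemidef := by
  open scoped MatrixOrder Matrix.Norms.L2Operator in
    obtain ⟨B, hB⟩ := CStarAlgebra.nonneg_iff_eq_star_mul_self.mp hX.nonneg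
  rw [star_eq_conjTranspose] at hB
  subst hB
  have hdecomp : Bᴴ * B = vecMulVec (star (B 0)) (star (star (B 0)))
      + vecMulVec (star (B 1)) (star (star (B 1)))
      + vecMulVec (star (B 2)) (star (star (B 2))) := by
    ext i j
    simp [mul_apply, vecMulVec_apply, conjTranspose_apply, Fin.sum_univ_three]
  rw [hdecomp, choiMap_add, choiMap_add]
  exact ((choi_rank_one _).add (choi_rank_one _)).add (choi_rank_one _)
end

section
/- For all complex numbers x₁, x₂, x₃, the following inequality holds: |x₁|²|x₃|⁴ + |x₂|²|x₁|⁴ + |x₃|²|x₂|⁴ − |x₁|²|x₂|²|x₃|² − 2|x₁|²·Re(conj(x₂)²·x₃²) ≥ 0. (This quantity equals det(Ψ₃(xx*)) for x = (x₁,x₂,x₃)ᵗ, and the inequality follows from the arithmetic mean–geometric mean inequality.) -/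
open Complex

/-- The determinant inequality for Ψ₃: for all complex numbers x₁, x₂, x₃,
|x₁|²|x₃|⁴ + |x₂|²|x₁|⁴ + |x₃|²|x₂|⁴ − |x₁|²|x₂|²|x₃|² − 2|x₁|²·Re(conj(x₂)²x₃²) ≥ 0. -/
theorem psi3_det_nonneg (x1 x2 x3 : ℂ) :
    0 ≤ ‖x1‖ ^ 2 * ‖x3‖ ^ 4
      + ‖x2‖ ^ 2 * ‖x1‖ ^ 4
      + ‖x3‖ ^ 2 * ‖x2‖ ^ 4
      - ‖x1‖ ^ 2 * ‖x2‖ ^ 2 * ‖x3‖ ^ 2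
      - 2 * ‖x1‖ ^ 2 * ((starRingEnd ℂ x2) ^ 2 * x3 ^ 2).re := by
  have hr : ((starRingEnd ℂ x2) ^ 2 * x3 ^ 2).re ≤ ‖x2‖ ^ 2 * ‖x3‖ ^ 2 := by
    calc ((starRingEnd ℂ x2) ^ 2 * x3 ^ 2).re ≤ ‖(starRingEnd ℂ x2) ^ 2 * x3 ^ 2‖ :=
          Complex.re_le_norm _
      _ = ‖x2‖ ^ 2 * ‖x3‖ ^ 2 := by
          simp [map_mul, map_pow]
  have ha := norm_nonneg x1
  have hb := norm_nonneg x2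
  have hc := norm_nonneg x3
  set a := ‖x1‖
  set b := ‖x2‖
  set c := ‖x3‖
  have key : 2 * a^2 * ((starRingEnd ℂ) x2 ^ 2 * x3 ^ 2).re ≤ 2 * a^2 * (b^2 * c^2) := by
    have := mul_le_mul_of_nonneg_left hr (mul_nonneg zero_le_two (sq_nonneg a))
    linarith
  have habc : (0:ℝ) ≤ a * b * c := mul_nonneg (mul_nonneg ha hb) hc
  have h3 : 3 * (a*b*c) ≤ a^2*c + a*b^2 + b*c^2 := by
    nlinarith [mul_nonneg hc (sq_nonneg (a-b)), mul_nonneg ha (sq_nonneg (b-c)),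
      mul_nonneg hb (sq_nonneg (c-a)), mul_nonneg ha (sq_nonneg (a-b)),
      mul_nonneg hb (sq_nonneg (b-c)), mul_nonneg hc (sq_nonneg (c-a))]
  have h4 : 3 * (a*b*c)^2 ≤ (a*b*c) * (a^2*c + a*b^2 + b*c^2) := by
    nlinarith [mul_le_mul_of_nonneg_left h3 habc]
  nlinarith [sq_nonneg (a*c^2 - a^2*b), sq_nonneg (a^2*b - b^2*c), sq_nonneg (b^2*c - a*c^2),
    h4, key]
end

section
/- For real column vectors x = (x₁,x₂,x₃)ᵗ and y = (y₁,y₂,y₃)ᵗ in ℝ³, the real biquadratic form associated with the Choi map satisfies yᵗΦ(xxᵗ)y = (x₁²+x₃²)y₁² + (x₂²+x₁²)y₂² + (x₃²+x₂²)y₃² − 2(x₁x₂y₁y₂ + x₂x₃y₂y₃ + x₃x₁y₃y₁), and this quantity is nonnegative for all x, y ∈ ℝ³. -/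
open Matrix Complex ComplexOrder

/-- The biquadratic real form of the Choi map: for real vectors x, y,
yᵗ·Φ(xxᵗ)·y = (x₁²+x₃²)y₁² + (x₂²+x₁²)y₂² + (x₃²+x₂²)y₃²
              − 2(x₁x₂y₁y₂ + x₂x₃y₂y₃ + x₃x₁y₃y₁), and this quantity is nonnegative. -/
theorem choi_biquadratic_form (x y : Fin 3 → ℝ) :
    (fun j => (y j : ℂ)) ⬝ᵥ
        (ChoiMap ((vecMulVec x x).map Complex.ofReal)).mulVec (fun j => (y j : ℂ)) =
      (((x 0 ^ 2 + x 2 ^ 2) * y 0 ^ 2 + (x 1 ^ 2 + x 0 ^ 2) * y 1 ^ 2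
          + (x 2 ^ 2 + x 1 ^ 2) * y 2 ^ 2
          - 2 * (x 0 * x 1 * y 0 * y 1 + x 1 * x 2 * y 1 * y 2 + x 2 * x 0 * y 2 * y 0) : ℝ)
        : ℂ) ∧
    0 ≤ (x 0 ^ 2 + x 2 ^ 2) * y 0 ^ 2 + (x 1 ^ 2 + x 0 ^ 2) * y 1 ^ 2
          + (x 2 ^ 2 + x 1 ^ 2) * y 2 ^ 2
          - 2 * (x 0 * x 1 * y 0 * y 1 + x 1 * x 2 * y 1 * y 2 + x 2 * x 0 * y 2 * y 0) := by
  constructor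
  · simp [ChoiMap, vecMulVec_apply, Matrix.map_apply, dotProduct, mulVec, Fin.sum_univ_three]
    push_cast
    ring
  · set F := (x 0 ^ 2 + x 2 ^ 2) * y 0 ^ 2 + (x 1 ^ 2 + x 0 ^ 2) * y 1 ^ 2
        + (x 2 ^ 2 + x 1 ^ 2) * y 2 ^ 2
        - 2 * (x 0 * x 1 * y 0 * y 1 + x 1 * x 2 * y 1 * y 2 + x 2 * x 0 * y 2 * y 0) with hF
    have key : 4 * ((y 0 ^ 2 + y 1 ^ 2 + y 2 ^ 2) * F) =
        (2 * (x 0 * y 0 * y 0) + x 0 * y 1 * y 1 - 2 * (x 1 * y 0 * y 1)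
            - x 2 * y 0 * y 2) ^ 2
        + 3 * (x 0 * y 1 * y 1 - x 2 * y 0 * y 2) ^ 2
        + (2 * (x 0 * y 0 * y 1) - x 1 * y 1 * y 1 - 2 * (x 1 * y 2 * y 2)
            + x 2 * y 1 * y 2) ^ 2
        + (2 * (x 0 * y 0 * y 2) + x 1 * y 1 * y 2 - x 2 * y 0 * y 0
            - 2 * (x 2 * y 2 * y 2)) ^ 2
        + (2 * (x 0 * y 1 * y 2) - x 1 * y 0 * y 2 - x 2 * y 0 * y 1) ^ 2
        + 3 * (x 1 * y 1 * y 1 - x 2 * y 1 * y 2) ^ 2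
        + 3 * (x 1 * y 0 * y 2 - x 2 * y 0 * y 1) ^ 2
        + 3 * (x 1 * y 1 * y 2 - x 2 * y 0 * y 0) ^ 2 := by
      rw [hF]; ring
    have key2 : 0 ≤ (y 0 ^ 2 + y 1 ^ 2 + y 2 ^ 2) * F := by
      have hs : (0:ℝ) ≤ (2 * (x 0 * y 0 * y 0) + x 0 * y 1 * y 1 - 2 * (x 1 * y 0 * y 1)
            - x 2 * y 0 * y 2) ^ 2
          + 3 * (x 0 * y 1 * y 1 - x 2 * y 0 * y 2) ^ 2
          + (2 * (x 0 * y 0 * y 1) - x 1 * y 1 * y 1 - 2 * (x 1 * y 2 * y 2)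
              + x 2 * y 1 * y 2) ^ 2
          + (2 * (x 0 * y 0 * y 2) + x 1 * y 1 * y 2 - x 2 * y 0 * y 0
              - 2 * (x 2 * y 2 * y 2)) ^ 2
          + (2 * (x 0 * y 1 * y 2) - x 1 * y 0 * y 2 - x 2 * y 0 * y 1) ^ 2
          + 3 * (x 1 * y 1 * y 1 - x 2 * y 1 * y 2) ^ 2
          + 3 * (x 1 * y 0 * y 2 - x 2 * y 0 * y 1) ^ 2
          + 3 * (x 1 * y 1 * y 2 - x 2 * y 0 * y 0) ^ 2 := by positivity
      linarith [key, hs]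
    rcases lt_or_eq_of_le (by positivity : (0:ℝ) ≤ y 0 ^ 2 + y 1 ^ 2 + y 2 ^ 2) with h | h
    · exact le_of_mul_le_mul_left (by rw [mul_zero]; exact key2) h
    · have e0 := sq_nonneg (y 0); have e1 := sq_nonneg (y 1); have e2 := sq_nonneg (y 2)
      have h0 : y 0 = 0 := pow_eq_zero_iff two_ne_zero |>.mp (by linarith)
      have h1 : y 1 = 0 := pow_eq_zero_iff two_ne_zero |>.mp (by linarith)
      have h2 : y 2 = 0 := pow_eq_zero_iff two_ne_zero |>.mp (by linarith)
      rw [hF, h0, h1, h2]; norm_num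
end
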